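/- Let n be a natural number, k ∈ Fin n, and let x, y : Fin n → Bool satisfy y j = x j for all j ≠ k. Assume that the new opinion of agent k is a (weak) minority opinion among the other agents, i.e., card{j ≠ k : x j = y k} ≤ card{j ≠ k : x j ≠ y k}. Then Σ_{i,j ∈ Fin n} 1{y i ≠ y j} ≥ Σ_{i,j ∈ Fin n} 1{x i ≠ x j}. -/
import Mathlib


open Finset

lemma stmt_8_decomp {n : ℕ} (k : Fin n) (z : Fin n → Bool) :
    (∑ i : Fin n, ∑ j : Fin n, if z i ≠ z j then (1 : ℤ) else 0)
      = (∑ i ∈ univ.erase k, ∑ j ∈ univ.erase k, if z i ≠ z j then (1 : ℤ) else 0)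
        + 2 * ∑ j ∈ univ.erase k, (if z j ≠ z k then (1 : ℤ) else 0) := by
  have h1 : ∀ g : Fin n → ℤ, ∑ j, g j = (∑ j ∈ univ.erase k, g j) + g k :=
    fun g => (Finset.sum_erase_add _ _ (mem_univ k)).symm
  rw [h1 (fun i => ∑ j, if z i ≠ z j then (1:ℤ) else 0)]
  simp only [h1 (fun j => if z _ ≠ z j then (1:ℤ) else 0)]
  rw [Finset.sum_add_distrib]
  have hsymm : (∑ i ∈ univ.erase k, (if z i ≠ z k then (1:ℤ) else 0))
      = ∑ j ∈ univ.erase k, (if z k ≠ z j then (1:ℤ) else 0) := by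
    apply Finset.sum_congr rfl
    intro i _
    simp [ne_comm]
  simp only [ne_eq, not_true_eq_false, if_false]
  ring_nf
  rw [hsymm]
  ring

/-- If only agent `k` may change its opinion between the profiles `x` and `y`, and the new
opinion `y k` is a weak minority among the other agents, then the total pairwise
disagreement does not decrease. -/
theorem stmt_8 (n : ℕ) (k : Fin n) (x y : Fin n → Bool)
    (h : ∀ j : Fin n, j ≠ k → y j = x j)
    (hmin : ((Finset.univ.erase k).filter (fun j => x j = y k)).card
      ≤ ((Finset.univ.erase k).filter (fun j => x j ≠ y k)).card) :
    (∑ i : Fin n, ∑ j : Fin n, if x i ≠ x j then (1 : ℤ) else 0)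
      ≤ ∑ i : Fin n, ∑ j : Fin n, if y i ≠ y j then (1 : ℤ) else 0 := by
  rw [stmt_8_decomp k x, stmt_8_decomp k y]
  have hoff : (∑ i ∈ univ.erase k, ∑ j ∈ univ.erase k, if y i ≠ y j then (1 : ℤ) else 0)
      = ∑ i ∈ univ.erase k, ∑ j ∈ univ.erase k, if x i ≠ x j then (1 : ℤ) else 0 := by
    apply Finset.sum_congr rfl; intro i hi
    apply Finset.sum_congr rfl; intro j hj
    rw [h i (Finset.ne_of_mem_erase hi), h j (Finset.ne_of_mem_erase hj)]
  rw [hoff]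
  have hcross : (∑ j ∈ univ.erase k, (if x j ≠ x k then (1 : ℤ) else 0))
      ≤ ∑ j ∈ univ.erase k, (if y j ≠ y k then (1 : ℤ) else 0) := by
    have hy : (∑ j ∈ univ.erase k, (if y j ≠ y k then (1 : ℤ) else 0))
        = ∑ j ∈ univ.erase k, (if x j ≠ y k then (1 : ℤ) else 0) := by
      apply Finset.sum_congr rfl; intro j hj
      rw [h j (Finset.ne_of_mem_erase hj)]
    rw [hy]
    by_cases hk : x k = y k
    · simp [hk]
    · have hk' : x k = !(y k) := by
        cases hx : x k <;> cases hy' : y k <;> simp_all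
      have hiff : ∀ j : Fin n, (x j ≠ x k) ↔ (x j = y k) := by
        intro j; rw [hk']; cases hx : x j <;> cases hy' : y k <;> simp
      calc (∑ j ∈ univ.erase k, (if x j ≠ x k then (1 : ℤ) else 0))
          = ∑ j ∈ univ.erase k, (if x j = y k then (1 : ℤ) else 0) := by
            apply Finset.sum_congr rfl; intro j _; simp [hiff j]
        _ = ((univ.erase k).filter (fun j => x j = y k)).card := by
            rw [Finset.sum_boole]
        _ ≤ ((univ.erase k).filter (fun j => x j ≠ y k)).card := by
            exact_mod_cast hmin
        _ = ∑ j ∈ univ.erase k, (if x j ≠ y k then (1 : ℤ) else 0) := by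
            rw [Finset.sum_boole]
  linarith
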